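/- Suppose ε is a ℂ-valued map on group elements of a group G (with distinguished elements m, central values μ ∈ ℂ*) satisfying ε([g h]) − ε([g m h]) = ε([g])ε([h]) and ε([m^{±1} g]) = μ^{±1} ε([g]) = ε([g m^{±1}]) for all g, h ∈ G, and ε([e]) = 1 − μ. If b = w m w^{-1} for some w ∈ G, then ε([b]) + μ ε([b^{-1}]) = ε([e]) + ε([m]), i.e. ε([b^{-1}]) = μ^{-1}((1−μ) + μ(1−μ) − ε([b])). -/
import Mathlib

/-- If `ε : G → ℂ` satisfies the cord-algebra relations
`ε(e) = 1 − μ`, `ε(m^{±1}g) = μ^{±1}ε(g) = ε(gm^{±1})`, and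
`ε(gh) − ε(gmh) = ε(g)ε(h)`, and `b = w m w⁻¹`, then
`ε(b) + μ ε(b⁻¹) = ε(e) + ε(m)`. -/
theorem stmt9 {G : Type*} [Group G] (m : G) (μ : ℂ) (hμ0 : μ ≠ 0) (hμ1 : μ ≠ 1)
    (ε : G → ℂ)
    (he : ε 1 = 1 - μ)
    (hm : ∀ g : G, ε (m * g) = μ * ε g ∧ ε (g * m) = μ * ε g)
    (hminv : ∀ g : G, ε (m⁻¹ * g) = μ⁻¹ * ε g ∧ ε (g * m⁻¹) = μ⁻¹ * ε g)
    (hprod : ∀ g h : G, ε (g * h) - ε (g * m * h) = ε g * ε h)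
    (b w : G) (hb : b = w * m * w⁻¹) :
    ε b + μ * ε b⁻¹ = ε 1 + ε m := by
  have hbinv : b⁻¹ = w * m⁻¹ * w⁻¹ := by
    rw [hb]; group
  have h1 := hprod w w⁻¹
  rw [mul_inv_cancel] at h1
  have h2 := hprod w (m⁻¹ * w⁻¹)
  have e1 : w * (m⁻¹ * w⁻¹) = w * m⁻¹ * w⁻¹ := by group
  have e2 : w * m * (m⁻¹ * w⁻¹) = (1 : G) := by group
  rw [e1, e2, (hminv w⁻¹).1] at h2
  have hmval : ε m = μ * ε 1 := by
    have := (hm 1).1; rwa [mul_one] at this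
  rw [hbinv, hb]
  have hμ : μ * μ⁻¹ = 1 := mul_inv_cancel₀ hμ0
  have : μ * ε (w * m⁻¹ * w⁻¹) = μ * ε 1 + (ε 1 - ε (w * m * w⁻¹)) := by
    linear_combination μ * h2 - h1 + ε w * ε w⁻¹ * hμ
  rw [this, hmval]
  ring
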